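/- Let b₁, b₂, b₃ be an orthonormal basis (over ℝ) of a Lagrangian subspace of ℂ³ with its standard symplectic structure, and let γ₁, γ₂, γ₃ ≥ 0 with γ₁ + γ₂ + γ₃ < 1. Then |Ω(b₁ ∧ b₂ ∧ b₃)| ≥ 1 - γ₁ - γ₂ - γ₃ > 0, where Ω = dz₁∧dz₂∧dz₃ + γ₁ dz₁∧dz̄₂∧dz̄₃ + γ₂ dz̄₁∧dz₂∧dz̄₃ + γ₃ dz̄₁∧dz̄₂∧dz₃. In particular Ω is nonvanishing on every Lagrangian 3-dimensional real subspace of ℂ³. -/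

import Mathlib

open Matrix Complex

/-- Complex Lagrange identity for triples. -/
lemma lagrange3 (v w : Fin 3 → ℂ) :
    (∑ i, Complex.normSq (v i)) * (∑ i, Complex.normSq (w i)) =
      Complex.normSq (∑ i, v i * (starRingEnd ℂ) (w i))
      + Complex.normSq (v 0 * w 1 - v 1 * w 0)
      + Complex.normSq (v 0 * w 2 - v 2 * w 0)
      + Complex.normSq (v 1 * w 2 - v 2 * w 1) := by
  simp only [Fin.sum_univ_three, Complex.normSq_apply, Complex.add_re, Complex.add_im,
    Complex.mul_re, Complex.mul_im, Complex.sub_re, Complex.sub_im, Complex.conj_re,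
    Complex.conj_im]
  ring

/-- Hadamard inequality for 3×3 complex matrices with unit-norm rows. -/
lemma hadamard3 (u v w : Fin 3 → ℂ)
    (hu : (∑ i, Complex.normSq (u i)) = 1)
    (hv : (∑ i, Complex.normSq (v i)) = 1)
    (hw : (∑ i, Complex.normSq (w i)) = 1) :
    ‖u 0 * (v 1 * w 2 - v 2 * w 1) - u 1 * (v 0 * w 2 - v 2 * w 0)
      + u 2 * (v 0 * w 1 - v 1 * w 0)‖ ≤ 1 := by
  set c : Fin 3 → ℂ := ![v 1 * w 2 - v 2 * w 1, -(v 0 * w 2 - v 2 * w 0), v 0 * w 1 - v 1 * w 0]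
    with hc
  have hcsum : (∑ i, Complex.normSq (c i)) ≤ 1 := by
    have := lagrange3 v w
    have h0 : 0 ≤ Complex.normSq (∑ i, v i * (starRingEnd ℂ) (w i)) := Complex.normSq_nonneg _
    simp only [hc, Fin.sum_univ_three, Matrix.cons_val_zero, Matrix.cons_val_one,
      Matrix.head_cons, Matrix.cons_val_two, Matrix.tail_cons, Complex.normSq_neg]
    nlinarith [this, hu.symm ▸ hv]
  have key := lagrange3 u (fun i => (starRingEnd ℂ) (c i))
  have hconj : (∑ i, Complex.normSq ((starRingEnd ℂ) (c i))) = ∑ i, Complex.normSq (c i) := by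
    simp [Complex.normSq_conj]
  have hdet : (∑ i, u i * (starRingEnd ℂ) ((starRingEnd ℂ) (c i))) = ∑ i, u i * c i := by
    simp
  rw [hdet, hconj, hu, one_mul] at key
  have h1 : Complex.normSq (∑ i, u i * c i) ≤ 1 := by
    nlinarith [Complex.normSq_nonneg (u 0 * (starRingEnd ℂ) (c 1) - u 1 * (starRingEnd ℂ) (c 0)),
      Complex.normSq_nonneg (u 0 * (starRingEnd ℂ) (c 2) - u 2 * (starRingEnd ℂ) (c 0)),
      Complex.normSq_nonneg (u 1 * (starRingEnd ℂ) (c 2) - u 2 * (starRingEnd ℂ) (c 1))]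
  have heq : (∑ i, u i * c i)
      = u 0 * (v 1 * w 2 - v 2 * w 1) - u 1 * (v 0 * w 2 - v 2 * w 0)
        + u 2 * (v 0 * w 1 - v 1 * w 0) := by
    simp [hc, Fin.sum_univ_three]
    ring
  rw [heq] at h1
  have := Complex.sq_norm (u 0 * (v 1 * w 2 - v 2 * w 1) - u 1 * (v 0 * w 2 - v 2 * w 0)
        + u 2 * (v 0 * w 1 - v 1 * w 0))
  nlinarith [norm_nonneg (u 0 * (v 1 * w 2 - v 2 * w 1) - u 1 * (v 0 * w 2 - v 2 * w 0)
        + u 2 * (v 0 * w 1 - v 1 * w 0))]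
lemma det3_abs_le_one (M : Matrix (Fin 3) (Fin 3) ℂ)
    (h : ∀ i, (∑ j, Complex.normSq (M i j)) = 1) : ‖M.det‖ ≤ 1 := by
  have e : M.det = M 0 0 * (M 1 1 * M 2 2 - M 1 2 * M 2 1)
      - M 0 1 * (M 1 0 * M 2 2 - M 1 2 * M 2 0)
      + M 0 2 * (M 1 0 * M 2 1 - M 1 1 * M 2 0) := by
    rw [Matrix.det_fin_three]; ring
  rw [e]
  exact hadamard3 (M 0) (M 1) (M 2) (h 0) (h 1) (h 2)

/-- Surjectivity estimate from Proposition `prop:u3normalform`: if `b₁, b₂, b₃` is a real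
orthonormal basis of a Lagrangian subspace of `ℂ³` and `γ₁, γ₂, γ₃ ≥ 0` with
`γ₁ + γ₂ + γ₃ < 1`, then
`Ω = dz₁∧dz₂∧dz₃ + γ₁ dz₁∧dz̄₂∧dz̄₃ + γ₂ dz̄₁∧dz₂∧dz̄₃ + γ₃ dz̄₁∧dz̄₂∧dz₃`
satisfies `|Ω(b₁∧b₂∧b₃)| ≥ 1 - γ₁ - γ₂ - γ₃ > 0`; in particular `Ω(b₁∧b₂∧b₃) ≠ 0`. -/
theorem omega_nonvanishing_on_lagrangian (b : Fin 3 → Fin 3 → ℂ)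
    (horth : ∀ i j : Fin 3,
      (∑ k : Fin 3, ((b i k).re * (b j k).re + (b i k).im * (b j k).im))
        = if i = j then 1 else 0)
    (hlag : ∀ i j : Fin 3,
      (∑ k : Fin 3, ((b i k).re * (b j k).im - (b i k).im * (b j k).re)) = 0)
    (γ₁ γ₂ γ₃ : ℝ) (h₁ : 0 ≤ γ₁) (h₂ : 0 ≤ γ₂) (h₃ : 0 ≤ γ₃)
    (hsum : γ₁ + γ₂ + γ₃ < 1) :
    let D : (Fin 3 → Bool) → ℂ := fun s =>
      (Matrix.of fun i j : Fin 3 =>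
        if s i then (starRingEnd ℂ) (b j i) else b j i).det
    let Ω : ℂ := D ![false, false, false] + γ₁ * D ![false, true, true]
      + γ₂ * D ![true, false, true] + γ₃ * D ![true, true, false]
    1 - γ₁ - γ₂ - γ₃ ≤ ‖Ω‖ ∧ 0 < 1 - γ₁ - γ₂ - γ₃ ∧ Ω ≠ 0 := by
  intro D Ω
  set B : Matrix (Fin 3) (Fin 3) ℂ := Matrix.of fun i k => b i k with hB
  have hBBH : B * Bᴴ = 1 := by
    ext i j
    have h1 := horth i j
    have h2 := hlag i j
    simp only [Matrix.mul_apply, Matrix.conjTranspose_apply, hB, Matrix.of_apply,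
      Matrix.one_apply]
    apply Complex.ext
    · simp only [Complex.re_sum, Complex.mul_re, Complex.conj_re, Complex.conj_im,
        RCLike.star_def]
      split <;> simp_all [Finset.sum_congr rfl, mul_comm]
    · simp only [Complex.im_sum, Complex.mul_im, Complex.conj_re, Complex.conj_im,
        RCLike.star_def]
      split <;> [skip; skip] <;>
        · simp only [Complex.one_im, Complex.zero_im]
          rw [← neg_eq_zero, ← h2, ← Finset.sum_neg_distrib]
          exact Finset.sum_congr rfl fun k _ => by ring
  have hHB : Bᴴ * B = 1 := mul_eq_one_comm.mp hBBH
  have hcol : ∀ i : Fin 3, (∑ k, Complex.normSq (b k i)) = 1 := by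
    intro i
    have := congrFun (congrFun hHB i) i
    simp only [Matrix.mul_apply, Matrix.conjTranspose_apply, hB, Matrix.of_apply,
      Matrix.one_apply_eq] at this
    have := congrArg Complex.re this
    simp only [Complex.re_sum, Complex.one_re] at this
    rw [← this]
    exact Finset.sum_congr rfl fun k _ => by
      simp [Complex.normSq_apply, Complex.mul_re]
  have hD0 : ‖D ![false, false, false]‖ = 1 := by
    have h := congrArg Matrix.det hBBH
    rw [Matrix.det_mul, Matrix.det_conjTranspose, Matrix.det_one] at h
    have h1 : (Complex.normSq B.det : ℂ) = 1 := by rw [← Complex.mul_conj]; exact h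
    have h2 : Complex.normSq B.det = 1 := by exact_mod_cast h1
    have h3 : D ![false, false, false] = Bᵀ.det := by
      show (Matrix.of fun i j : Fin 3 =>
        if (![false, false, false] : Fin 3 → Bool) i then (starRingEnd ℂ) (b j i) else b j i).det
          = _
      congr 1
      ext i j
      fin_cases i <;> rfl
    rw [h3, Matrix.det_transpose, Complex.norm_def, h2, Real.sqrt_one]
  have hDle : ∀ s : Fin 3 → Bool, ‖D s‖ ≤ 1 := by
    intro s
    apply det3_abs_le_one
    intro i
    by_cases hs : s i
    · simp only [Matrix.of_apply, hs, if_true, Complex.normSq_conj]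
      exact hcol i
    · simp only [Matrix.of_apply, hs, if_false]
      exact hcol i
  have hΩ : D ![false, false, false]
      = Ω - ((γ₁ : ℂ) * D ![false, true, true] + (γ₂ : ℂ) * D ![true, false, true]
        + (γ₃ : ℂ) * D ![true, true, false]) := by
    show _ = (D ![false, false, false] + γ₁ * D ![false, true, true]
      + γ₂ * D ![true, false, true] + γ₃ * D ![true, true, false]) - _
    ring
  have habs : ‖(γ₁ : ℂ) * D ![false, true, true]
      + (γ₂ : ℂ) * D ![true, false, true] + (γ₃ : ℂ) * D ![true, true, false]‖
      ≤ γ₁ + γ₂ + γ₃ := by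
    calc ‖_‖ ≤ ‖(γ₁ : ℂ) * D ![false, true, true]
          + (γ₂ : ℂ) * D ![true, false, true]‖
          + ‖(γ₃ : ℂ) * D ![true, true, false]‖ := norm_add_le _ _
      _ ≤ ‖(γ₁ : ℂ) * D ![false, true, true]‖
          + ‖(γ₂ : ℂ) * D ![true, false, true]‖
          + ‖(γ₃ : ℂ) * D ![true, true, false]‖ := by
            have := norm_add_le ((γ₁ : ℂ) * D ![false, true, true])
              ((γ₂ : ℂ) * D ![true, false, true])
            linarith
      _ ≤ γ₁ + γ₂ + γ₃ := by
          have e1 : ‖(γ₁ : ℂ) * D ![false, true, true]‖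
              = γ₁ * ‖D ![false, true, true]‖ := by
            rw [norm_mul, Complex.norm_real, Real.norm_eq_abs, _root_.abs_of_nonneg h₁]
          have e2 : ‖(γ₂ : ℂ) * D ![true, false, true]‖
              = γ₂ * ‖D ![true, false, true]‖ := by
            rw [norm_mul, Complex.norm_real, Real.norm_eq_abs, _root_.abs_of_nonneg h₂]
          have e3 : ‖(γ₃ : ℂ) * D ![true, true, false]‖
              = γ₃ * ‖D ![true, true, false]‖ := by
            rw [norm_mul, Complex.norm_real, Real.norm_eq_abs, _root_.abs_of_nonneg h₃]
          rw [e1, e2, e3]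
          nlinarith [hDle ![false, true, true], hDle ![true, false, true],
            hDle ![true, true, false]]
  have hmain : 1 - γ₁ - γ₂ - γ₃ ≤ ‖Ω‖ := by
    have htri : ‖D ![false, false, false]‖ ≤ ‖Ω‖
        + ‖(γ₁ : ℂ) * D ![false, true, true]
          + (γ₂ : ℂ) * D ![true, false, true] + (γ₃ : ℂ) * D ![true, true, false]‖ := by
      rw [hΩ]
      exact norm_sub_le _ _
    rw [hD0] at htri
    linarith
  refine ⟨hmain, by linarith, ?_⟩
  intro h0
  rw [h0, norm_zero] at hmain
  linarith
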